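/- The isometry V in the extension theory: assume D is a nonnegative sesquilinear form on X and T, E, M satisfy the Fundamental Identity D(x,y) - D(Tx,Ty) = ⟨Ex,Ey⟩ - ⟨Mx,My⟩. Let K be the Hilbert space completion of {Dx : x ∈ X} with inner product ⟨Dx₁, Dx₂⟩ = D(x₁,x₂). Then the map V(DTx ⊕ Ex) = Dx ⊕ Mx is well-defined and isometric from its domain in K ⊕ L to K ⊕ L'. -/
import Mathlib


open scoped InnerProductSpace

set_option synthInstance.maxHeartbeats 1000000 in
/-- The isometry `V` of the extension theory: `D` is a nonnegative sesquilinear form on `X`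
(conjugate-linear in the first argument), realized on the Hilbert-space completion `K` of
`{Dx : x ∈ X}` via a linear map `ι : X → K` with `⟨ιx₁, ιx₂⟩ = D(x₁,x₂)`, and `T, E, M`
satisfy the Fundamental Identity.  Then `V(DTx ⊕ Ex) = Dx ⊕ Mx` is well-defined (equal
arguments give equal values) and isometric: `‖Dx ⊕ Mx‖² = ‖DTx ⊕ Ex‖²`. -/
theorem extension_isometry_wellDefined_and_isometric
    (X : Type*) [AddCommGroup X] [Module ℂ X]
    (L L' : Type*) [NormedAddCommGroup L] [InnerProductSpace ℂ L] [CompleteSpace L]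
    [NormedAddCommGroup L'] [InnerProductSpace ℂ L'] [CompleteSpace L']
    (K : Type*) [NormedAddCommGroup K] [InnerProductSpace ℂ K] [CompleteSpace K]
    (D : X →ₗ⋆[ℂ] X →ₗ[ℂ] ℂ) (hpos : ∀ x : X, 0 ≤ (D x x).re)
    (ι : X →ₗ[ℂ] K) (hι : ∀ x y : X, ⟪ι x, ι y⟫_ℂ = D x y)
    (hdense : DenseRange (ι : X → K))
    (T : X →ₗ[ℂ] X) (E : X →ₗ[ℂ] L) (M : X →ₗ[ℂ] L')
    (hFI : ∀ x y : X, D x y - D (T x) (T y) = ⟪E x, E y⟫_ℂ - ⟪M x, M y⟫_ℂ) :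
    (∀ x₁ x₂ : X, ι (T x₁) = ι (T x₂) → E x₁ = E x₂ → ι x₁ = ι x₂ ∧ M x₁ = M x₂) ∧
      ∀ x : X, ‖ι x‖ ^ 2 + ‖M x‖ ^ 2 = ‖ι (T x)‖ ^ 2 + ‖E x‖ ^ 2 := by
  have key : ∀ x : X, ‖ι x‖ ^ 2 + ‖M x‖ ^ 2 = ‖ι (T x)‖ ^ 2 + ‖E x‖ ^ 2 := by
    intro x
    have h := congrArg Complex.re (hFI x x)
    have h1 : (⟪ι x, ι x⟫_ℂ).re = ‖ι x‖ ^ 2 := by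
      exact inner_self_eq_norm_sq (𝕜 := ℂ) _
    have h2 : (⟪ι (T x), ι (T x)⟫_ℂ).re = ‖ι (T x)‖ ^ 2 := by
      exact inner_self_eq_norm_sq (𝕜 := ℂ) _
    have h3 : (⟪E x, E x⟫_ℂ).re = ‖E x‖ ^ 2 := by
      exact inner_self_eq_norm_sq (𝕜 := ℂ) _
    have h4 : (⟪M x, M x⟫_ℂ).re = ‖M x‖ ^ 2 := by
      exact inner_self_eq_norm_sq (𝕜 := ℂ) _
    rw [← hι x x, ← hι (T x) (T x)] at h
    simp only [Complex.sub_re] at h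
    rw [h1, h2, h3, h4] at h
    linarith
  refine ⟨fun x₁ x₂ hT hE => ?_, key⟩
  have hz := key (x₁ - x₂)
  have hTz : ι (T (x₁ - x₂)) = 0 := by
    simp [map_sub, sub_eq_zero, hT]
  have hEz : E (x₁ - x₂) = 0 := by
    simp [map_sub, sub_eq_zero, hE]
  rw [hTz, hEz] at hz
  simp only [norm_zero] at hz
  have hιz : ‖ι (x₁ - x₂)‖ = 0 := by nlinarith [norm_nonneg (ι (x₁ - x₂)), norm_nonneg (M (x₁ - x₂)), sq_nonneg ‖ι (x₁ - x₂)‖, sq_nonneg ‖M (x₁ - x₂)‖]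
  have hMz : ‖M (x₁ - x₂)‖ = 0 := by nlinarith [norm_nonneg (ι (x₁ - x₂)), norm_nonneg (M (x₁ - x₂)), sq_nonneg ‖ι (x₁ - x₂)‖, sq_nonneg ‖M (x₁ - x₂)‖]
  constructor
  · have := norm_eq_zero.mp hιz
    rw [map_sub, sub_eq_zero] at this; exact this
  · have := norm_eq_zero.mp hMz
    rw [map_sub, sub_eq_zero] at this; exact this
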